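/- In the Laver table of order 2^n with operation ⋆ₙ on {1,...,2^n}, for every p the sequence q ↦ p ⋆ₙ q is periodic with period π(p) dividing 2^n, π(p) is a power of 2, and the sequence p ⋆ₙ 1, p ⋆ₙ 2, ..., p ⋆ₙ π(p) is strictly increasing from p+1 mod 2^n to 2^n. -/
import Mathlib


def LaverAxioms (N : ℕ) (star : ℕ → ℕ → ℕ) : Prop :=
  (∀ p q, p ∈ Set.Icc 1 N → q ∈ Set.Icc 1 N → star p q ∈ Set.Icc 1 N) ∧
  (∀ p ∈ Set.Icc 1 N, star p 1 = p % N + 1) ∧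
  (∀ p q, p ∈ Set.Icc 1 N → q ∈ Set.Icc 1 N →
    star p (star q 1) = star (star p q) (star p 1))

section LaverAux

variable {N : ℕ} {star : ℕ → ℕ → ℕ}

/-- The basic recursion: for `1 ≤ q < N`, `p ⋆ (q+1) = (p ⋆ q) ⋆ (p ⋆ 1)`. -/
lemma laver_rec (h : LaverAxioms N star) {p q : ℕ} (hp : p ∈ Set.Icc 1 N)
    (hq1 : 1 ≤ q) (hqN : q < N) :
    star p (q + 1) = star (star p q) (star p 1) := by
  have h3 := h.2.2 p q hp ⟨hq1, le_of_lt hqN⟩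
  have h2 := h.2.1 q ⟨hq1, le_of_lt hqN⟩
  rw [h2, Nat.mod_eq_of_lt hqN] at h3
  exact h3

/-- `p ⋆ 1 = p + 1` for `p < N`. -/
lemma laver_one (h : LaverAxioms N star) {p : ℕ} (hp1 : 1 ≤ p) (hpN : p < N) :
    star p 1 = p + 1 := by
  have := h.2.1 p ⟨hp1, le_of_lt hpN⟩
  rwa [Nat.mod_eq_of_lt hpN] at this

/-- The top row is the identity. -/
lemma laver_top_row (h : LaverAxioms N star) (hN : 1 ≤ N) :
    ∀ q, 1 ≤ q → q ≤ N → star N q = q := by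
  intro q
  induction q with
  | zero => omega
  | succ q ihq =>
    intro _ hqN
    rcases Nat.eq_zero_or_pos q with hq0 | hq0
    · subst hq0
      have := h.2.1 N ⟨hN, le_rfl⟩
      rwa [Nat.mod_self] at this
    · have hqlt : q < N := by omega
      have h1 : star N 1 = 1 := by
        have := h.2.1 N ⟨hN, le_rfl⟩
        rwa [Nat.mod_self] at this
      rw [laver_rec h ⟨hN, le_rfl⟩ hq0 hqlt, ihq hq0 (le_of_lt hqlt), h1]
      have := h.2.1 q ⟨hq0, le_of_lt hqlt⟩
      rwa [Nat.mod_eq_of_lt hqlt] at this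

/-- Every entry of row `p < N` is `> p`. -/
lemma laver_gt (h : LaverAxioms N star) (hN : 1 ≤ N) :
    ∀ d p, N - p = d → 1 ≤ p → p < N → ∀ q, 1 ≤ q → q ≤ N → p < star p q := by
  intro d
  induction d using Nat.strong_induction_on with
  | _ d ih =>
    intro p hd hp1 hpN q
    induction q with
    | zero => omega
    | succ q ihq =>
      intro _ hqN
      rcases Nat.eq_zero_or_pos q with hq0 | hq0
      · subst hq0
        rw [laver_one h hp1 hpN]; omega
      · have hqlt : q < N := by omega
        set x := star p q with hx
        have hxmem : x ∈ Set.Icc 1 N := h.1 p q ⟨hp1, le_of_lt hpN⟩ ⟨hq0, le_of_lt hqlt⟩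
        have hxgt : p < x := ihq hq0 (le_of_lt hqlt)
        have hrec : star p (q + 1) = star x (p + 1) := by
          rw [laver_rec h ⟨hp1, le_of_lt hpN⟩ hq0 hqlt, laver_one h hp1 hpN]
        rcases Nat.eq_or_lt_of_le hxmem.2 with hxN | hxN
        · rw [hrec, hxN, laver_top_row h hN (p + 1) (by omega) (by omega)]; omega
        · have : x < star x (p + 1) :=
            ih (N - x) (by omega) x rfl hxmem.1 hxN (p + 1) (by omega) (by omega)
          omega

/-- `p ⋆ N = N` for every `p` in range. -/
lemma laver_top_col (h : LaverAxioms N star) (hN : 1 ≤ N) {p : ℕ}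
    (hp1 : 1 ≤ p) (hpN : p < N) : star p N = N := by
  have hNone : star N 1 = 1 := by
    have := h.2.1 N ⟨hN, le_rfl⟩
    rwa [Nat.mod_self] at this
  have h3 := h.2.2 p N ⟨hp1, le_of_lt hpN⟩ ⟨hN, le_rfl⟩
  rw [hNone, laver_one h hp1 hpN] at h3
  -- h3 : star p 1 = star (star p N) (p + 1),  star p 1 = p + 1
  have hstar1 : star p 1 = p + 1 := laver_one h hp1 hpN
  set x := star p N with hx
  have hxmem : x ∈ Set.Icc 1 N := h.1 p N ⟨hp1, le_of_lt hpN⟩ ⟨hN, le_rfl⟩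
  have hxgt : p < x := laver_gt h hN (N - p) p rfl hp1 hpN N hN le_rfl
  by_contra hxne
  have hxlt : x < N := lt_of_le_of_ne hxmem.2 hxne
  have hgt : x < star x (p + 1) :=
    laver_gt h hN (N - x) x rfl hxmem.1 hxlt (p + 1) (by omega) (by omega)
  omega

end LaverAux

/-- in the Laver table of order 2^n, each row q ↦ p ⋆ₙ q is periodic with
period π(p) = 2^k a power of 2 dividing 2^n (k ≤ n); π(p) is the smallest such period;
the first π(p) values are strictly increasing, ending with p ⋆ₙ π(p) = 2^n
(and starting from p ⋆ₙ 1 = p+1 mod 2^n, which is the first axiom). -/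
theorem laver_period (n : ℕ) (star : ℕ → ℕ → ℕ) (h : LaverAxioms (2 ^ n) star) :
    ∀ p ∈ Set.Icc 1 (2 ^ n), ∃ k ≤ n,
      (∀ q, 1 ≤ q → q + 2 ^ k ≤ 2 ^ n → star p (q + 2 ^ k) = star p q) ∧
      (∀ m, 0 < m → m < 2 ^ k →
        ∃ q, 1 ≤ q ∧ q + m ≤ 2 ^ n ∧ star p (q + m) ≠ star p q) ∧
      (∀ q, 1 ≤ q → q + 1 ≤ 2 ^ k → star p q < star p (q + 1)) ∧
      star p (2 ^ k) = 2 ^ n := by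
  intro p hp
  set N := 2 ^ n with hNdef
  have hN : 1 ≤ N := Nat.one_le_two_pow
  rcases Nat.eq_or_lt_of_le hp.2 with hpN | hpN
  · -- p = N : the identity row, period N = 2^n
    refine ⟨n, le_rfl, ?_, ?_, ?_, ?_⟩
    · intro q hq1 hqN; omega
    · intro m hm0 hmN
      refine ⟨1, le_rfl, by omega, ?_⟩
      rw [hpN, laver_top_row h hN (1 + m) (by omega) (by omega),
        laver_top_row h hN 1 le_rfl hN]
      omega
    · intro q hq1 hqN
      rw [hpN, laver_top_row h hN q hq1 (by omega),
        laver_top_row h hN (q + 1) (by omega) (by omega)]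
      omega
    · rw [hpN]; exact laver_top_row h hN N hN le_rfl
  · -- p < N
    have hp1 : 1 ≤ p := hp.1
    have htop : star p N = N := laver_top_col h hN hp1 hpN
    have hgtrow : ∀ q, 1 ≤ q → q ≤ N → p < star p q :=
      fun q hq1 hqN => laver_gt h hN (N - p) p rfl hp1 hpN q hq1 hqN
    have hrow_mem : ∀ q, 1 ≤ q → q ≤ N → star p q ∈ Set.Icc 1 N :=
      fun q hq1 hqN => h.1 p q ⟨hp1, le_of_lt hpN⟩ ⟨hq1, hqN⟩
    classical
    have hex : ∃ q, 1 ≤ q ∧ star p q = N := ⟨N, hN, htop⟩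
    set π := Nat.find hex with hπdef
    obtain ⟨hπ1, hπtop⟩ := Nat.find_spec hex
    have hπle : π ≤ N := Nat.find_le ⟨hN, htop⟩
    have hlt : ∀ q, 1 ≤ q → q < π → star p q ≠ N := by
      intro q hq1 hqπ hqe
      exact Nat.find_min hex hqπ ⟨hq1, hqe⟩
    -- strict increase before π
    have hinc : ∀ q, 1 ≤ q → q + 1 ≤ π → star p q < star p (q + 1) := by
      intro q hq1 hqπ
      have hqlt : q < N := by omega
      have hx : star p q < N :=
        lt_of_le_of_ne (hrow_mem q hq1 (by omega)).2 (hlt q hq1 (by omega))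
      have hx1 : 1 ≤ star p q := (hrow_mem q hq1 (by omega)).1
      rw [laver_rec h ⟨hp1, le_of_lt hpN⟩ hq1 hqlt, laver_one h hp1 hpN]
      exact laver_gt h hN (N - star p q) (star p q) rfl hx1 hx (p + 1) (by omega) (by omega)
    -- periodicity
    have hper : ∀ q, 1 ≤ q → q + π ≤ N → star p (q + π) = star p q := by
      intro q
      induction q with
      | zero => omega
      | succ q ihq =>
        intro _ hqN
        rcases Nat.eq_zero_or_pos q with hq0 | hq0
        · subst hq0
          have hπltN : π < N := by omega
          rw [show 0 + 1 + π = π + 1 by ring,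
            laver_rec h ⟨hp1, le_of_lt hpN⟩ hπ1 hπltN, hπtop, laver_one h hp1 hpN,
            laver_top_row h hN (p + 1) (by omega) (by omega)]
        · have h1 : q + π ≥ 1 := by omega
          have h2 : q + π < N := by omega
          have h3 : q < N := by omega
          rw [show q + 1 + π = (q + π) + 1 by ring,
            laver_rec h ⟨hp1, le_of_lt hpN⟩ h1 h2, ihq hq0 (by omega),
            ← laver_rec h ⟨hp1, le_of_lt hpN⟩ hq0 h3]
    have hmul : ∀ j q, 1 ≤ q → q + j * π ≤ N → star p (q + j * π) = star p q := by
      intro j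
      induction j with
      | zero => intro q _ _; simp
      | succ j ihj =>
        intro q hq1 hqN
        rw [show q + (j + 1) * π = (q + j * π) + π by ring,
          hper (q + j * π) (by omega) (by nlinarith [Nat.le_refl 1]),
          ihj q hq1 (by nlinarith)]
    -- π divides N
    have hdvd : π ∣ N := by
      rcases Nat.eq_zero_or_pos (N % π) with hr | hr
      · exact Nat.dvd_of_mod_eq_zero hr
      · exfalso
        have hrlt : N % π < π := Nat.mod_lt _ (by omega)
        have heq : N % π + (N / π) * π = N := Nat.mod_add_div' N π
        have := hmul (N / π) (N % π) hr (by omega)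
        rw [heq, htop] at this
        exact hlt (N % π) hr hrlt this.symm
    obtain ⟨k, hkn, hk⟩ := (Nat.dvd_prime_pow Nat.prime_two).mp hdvd
    refine ⟨k, hkn, ?_, ?_, ?_, ?_⟩
    · intro q hq1 hqN
      rw [← hk] at hqN ⊢
      exact hper q hq1 hqN
    · intro m hm0 hmk
      rw [← hk] at hmk
      refine ⟨π - m, by omega, by omega, ?_⟩
      rw [show π - m + m = π by omega, hπtop]
      exact fun he => hlt (π - m) (by omega) (by omega) he.symm
    · intro q hq1 hqk
      rw [← hk] at hqk
      exact hinc q hq1 hqk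
    · rw [← hk]; exact hπtop
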